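/- (Converse Lyapunov theorem for exponential incremental stability.) Suppose f is uniformly L_f-Lipschitz on D and the system x_{k+1} = f(k, x_k) is uniformly exponentially incrementally stable in D with constants d > 0, λ ∈ (0,1). Then there exist a function V : ℕ → ℝⁿ → ℝⁿ → ℝ and constants c₁, c₂, c₃ > 0 and β ∈ (0,1) such that for all ξ, ζ, ξ̃, ζ̃ ∈ D and all k: (a) c₁‖ξ − ζ‖² ≤ V(k, ξ, ζ) ≤ c₂‖ξ − ζ‖²; (b) V(k+1, f(k, ξ), f(k, ζ)) ≤ β² V(k, ξ, ζ); (c) |V(k, ξ, ζ) − V(k, ξ̃, ζ̃)| ≤ c₃ (‖ξ − ξ̃‖ + ‖ζ − ζ̃‖)(‖ξ − ζ‖ + ‖ξ̃ − ζ̃‖). -/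

import Mathlib

set_option maxHeartbeats 1000000

open Finset

/-- Orbit of the time-varying system starting at time `k` from state `ξ`. -/
def convLyapOrb {E : Type*} (f : ℕ → E → E) (k : ℕ) (ξ : E) : ℕ → E
  | 0 => ξ
  | m + 1 => f (k + m) (convLyapOrb f k ξ m)

/-- Converse Lyapunov theorem for exponential incremental stability (Theorem 6). -/
theorem converse_lyapunov_incremental
    (n : ℕ) (D : Set (EuclideanSpace ℝ (Fin n)))
    (f : ℕ → EuclideanSpace ℝ (Fin n) → EuclideanSpace ℝ (Fin n))
    (Lf d lam : ℝ)
    (hD : IsCompact D) (h0D : (0 : EuclideanSpace ℝ (Fin n)) ∈ D)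
    (hinv : ∀ k, ∀ x ∈ D, f k x ∈ D)
    (hLf : 0 < Lf)
    (hLip : ∀ k, ∀ p ∈ D, ∀ q ∈ D, ‖f k p - f k q‖ ≤ Lf * ‖p - q‖)
    (hd : 0 < d) (hlam : 0 < lam ∧ lam < 1)
    (hEIS : ∀ (k₀ : ℕ) (x y : ℕ → EuclideanSpace ℝ (Fin n)),
      x k₀ ∈ D → y k₀ ∈ D →
      (∀ k, k₀ ≤ k → x (k + 1) = f k (x k)) →
      (∀ k, k₀ ≤ k → y (k + 1) = f k (y k)) →
      ∀ k, k₀ ≤ k → ‖x k - y k‖ ≤ d * ‖x k₀ - y k₀‖ * lam ^ (k - k₀)) :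
    ∃ (V : ℕ → EuclideanSpace ℝ (Fin n) → EuclideanSpace ℝ (Fin n) → ℝ)
      (c₁ c₂ c₃ β : ℝ),
      0 < c₁ ∧ 0 < c₂ ∧ 0 < c₃ ∧ 0 < β ∧ β < 1 ∧
      (∀ k, ∀ ξ ∈ D, ∀ ζ ∈ D,
        c₁ * ‖ξ - ζ‖ ^ 2 ≤ V k ξ ζ ∧ V k ξ ζ ≤ c₂ * ‖ξ - ζ‖ ^ 2) ∧
      (∀ k, ∀ ξ ∈ D, ∀ ζ ∈ D, V (k + 1) (f k ξ) (f k ζ) ≤ β ^ 2 * V k ξ ζ) ∧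
      (∀ k, ∀ ξ ∈ D, ∀ ζ ∈ D, ∀ ξ' ∈ D, ∀ ζ' ∈ D,
        |V k ξ ζ - V k ξ' ζ'| ≤
          c₃ * (‖ξ - ξ'‖ + ‖ζ - ζ'‖) * (‖ξ - ζ‖ + ‖ξ' - ζ'‖)) := by
  obtain ⟨hlam0, hlam1⟩ := hlam
  -- orbits stay in D
  have hmem : ∀ (k : ℕ) (ξ : EuclideanSpace ℝ (Fin n)), ξ ∈ D → ∀ m,
      convLyapOrb f k ξ m ∈ D := by
    intro k ξ hξ m
    induction m with
    | zero => exact hξ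
    | succ m ih => exact hinv _ _ ih
  -- shift identity
  have hshift : ∀ (k : ℕ) (ξ : EuclideanSpace ℝ (Fin n)) (j : ℕ),
      convLyapOrb f (k + 1) (f k ξ) j = convLyapOrb f k ξ (j + 1) := by
    intro k ξ j
    induction j with
    | zero => rfl
    | succ j ih =>
      have h : k + 1 + j = k + (j + 1) := by omega
      show f (k + 1 + j) (convLyapOrb f (k + 1) (f k ξ) j)
        = f (k + (j + 1)) (convLyapOrb f k ξ (j + 1))
      rw [ih, h]
  -- contraction along orbits
  have hcontr : ∀ (k m : ℕ) (ξ ζ : EuclideanSpace ℝ (Fin n)), ξ ∈ D → ζ ∈ D →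
      ‖convLyapOrb f k ξ m - convLyapOrb f k ζ m‖ ≤ d * ‖ξ - ζ‖ * lam ^ m := by
    intro k m ξ ζ hξ hζ
    have hrec : ∀ (η : EuclideanSpace ℝ (Fin n)), ∀ j, k ≤ j →
        convLyapOrb f k η (j + 1 - k) = f j (convLyapOrb f k η (j - k)) := by
      intro η j hj
      have h1 : j + 1 - k = (j - k) + 1 := by omega
      rw [h1]
      show f (k + (j - k)) (convLyapOrb f k η (j - k)) = f j (convLyapOrb f k η (j - k))
      rw [Nat.add_sub_cancel' hj]
    have h0 : ∀ (η : EuclideanSpace ℝ (Fin n)), convLyapOrb f k η (k - k) = η := by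
      intro η; rw [Nat.sub_self]; rfl
    have := hEIS k (fun i => convLyapOrb f k ξ (i - k)) (fun i => convLyapOrb f k ζ (i - k))
      (by simpa [h0, convLyapOrb] using hξ) (by simpa [h0, convLyapOrb] using hζ)
      (fun j hj => hrec ξ j hj) (fun j hj => hrec ζ j hj) (k + m) (Nat.le_add_right _ _)
    simpa only [h0, Nat.add_sub_cancel_left] using this
  -- d' := max d 1
  set d' : ℝ := max d 1 with hd'
  have hd'1 : (1 : ℝ) ≤ d' := le_max_right _ _
  have hdd' : d ≤ d' := le_max_left _ _
  have hd'0 : (0 : ℝ) < d' := lt_of_lt_of_le one_pos hd'1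
  -- choose N
  obtain ⟨N0, hN0⟩ := exists_pow_lt_of_lt_one
    (show (0 : ℝ) < 1 / (2 * d' ^ 2) by positivity) hlam1
  set N : ℕ := N0 + 1 with hN
  have hN1 : 1 ≤ N := Nat.le_add_left _ _
  have hlamN : d' ^ 2 * lam ^ N < 1 / 2 := by
    have h1 : lam ^ N ≤ lam ^ N0 :=
      pow_le_pow_of_le_one hlam0.le hlam1.le (Nat.le_add_right _ _)
    have h2 : d' ^ 2 * lam ^ N ≤ d' ^ 2 * lam ^ N0 :=
      mul_le_mul_of_nonneg_left h1 (by positivity)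
    have h3 : d' ^ 2 * lam ^ N0 < d' ^ 2 * (1 / (2 * d' ^ 2)) := by
      have hp : (0 : ℝ) < d' ^ 2 := by positivity
      nlinarith
    have h4 : d' ^ 2 * (1 / (2 * d' ^ 2)) = 1 / 2 := by
      field_simp
    linarith
  -- define V
  set V : ℕ → EuclideanSpace ℝ (Fin n) → EuclideanSpace ℝ (Fin n) → ℝ := fun k ξ ζ =>
    ∑ j ∈ Finset.range N, ‖convLyapOrb f k ξ j - convLyapOrb f k ζ j‖ ^ 2 with hV
  set c₂ : ℝ := N * d' ^ 2 with hc₂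
  have hc₂1 : (1 : ℝ) ≤ c₂ := by
    have h1 : (1 : ℝ) ≤ (N : ℝ) := by exact_mod_cast hN1
    have h2 : (1 : ℝ) ≤ d' ^ 2 := by nlinarith
    calc (1 : ℝ) = 1 * 1 := by ring
      _ ≤ (N : ℝ) * d' ^ 2 := mul_le_mul h1 h2 one_pos.le (by positivity)
  have hc₂0 : (0 : ℝ) < c₂ := lt_of_lt_of_le one_pos hc₂1
  -- per-term norm bound
  have hterm : ∀ (k j : ℕ) (ξ ζ : EuclideanSpace ℝ (Fin n)), ξ ∈ D → ζ ∈ D →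
      ‖convLyapOrb f k ξ j - convLyapOrb f k ζ j‖ ≤ d' * ‖ξ - ζ‖ := by
    intro k j ξ ζ hξ hζ
    calc ‖convLyapOrb f k ξ j - convLyapOrb f k ζ j‖
        ≤ d * ‖ξ - ζ‖ * lam ^ j := hcontr k j ξ ζ hξ hζ
      _ ≤ d * ‖ξ - ζ‖ * 1 := by
          apply mul_le_mul_of_nonneg_left (pow_le_one₀ hlam0.le hlam1.le)
          positivity
      _ = d * ‖ξ - ζ‖ := by ring
      _ ≤ d' * ‖ξ - ζ‖ := mul_le_mul_of_nonneg_right hdd' (norm_nonneg _)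
  -- bounds (a)
  have hupper : ∀ (k : ℕ) (ξ ζ : EuclideanSpace ℝ (Fin n)), ξ ∈ D → ζ ∈ D →
      V k ξ ζ ≤ c₂ * ‖ξ - ζ‖ ^ 2 := by
    intro k ξ ζ hξ hζ
    have h1 : V k ξ ζ ≤ ∑ _j ∈ Finset.range N, d' ^ 2 * ‖ξ - ζ‖ ^ 2 := by
      apply Finset.sum_le_sum
      intro j _
      have h := hterm k j ξ ζ hξ hζ
      calc ‖convLyapOrb f k ξ j - convLyapOrb f k ζ j‖ ^ 2
          ≤ (d' * ‖ξ - ζ‖) ^ 2 := pow_le_pow_left₀ (norm_nonneg _) h 2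
        _ = d' ^ 2 * ‖ξ - ζ‖ ^ 2 := by ring
    calc V k ξ ζ ≤ ∑ _j ∈ Finset.range N, d' ^ 2 * ‖ξ - ζ‖ ^ 2 := h1
      _ = N * (d' ^ 2 * ‖ξ - ζ‖ ^ 2) := by
          rw [Finset.sum_const, Finset.card_range, nsmul_eq_mul]
      _ = c₂ * ‖ξ - ζ‖ ^ 2 := by rw [hc₂]; ring
  have hlower : ∀ (k : ℕ) (ξ ζ : EuclideanSpace ℝ (Fin n)), ‖ξ - ζ‖ ^ 2 ≤ V k ξ ζ := by
    intro k ξ ζ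
    have h0 : (0 : ℕ) ∈ Finset.range N := Finset.mem_range.mpr hN1
    have := Finset.single_le_sum
      (f := fun j => ‖convLyapOrb f k ξ j - convLyapOrb f k ζ j‖ ^ 2)
      (fun j _ => by positivity) h0
    simpa [convLyapOrb] using this
  -- β
  set β : ℝ := Real.sqrt (1 - 1 / (2 * c₂)) with hβ
  have harg0 : (0 : ℝ) < 1 - 1 / (2 * c₂) := by
    have h1 : 1 / (2 * c₂) ≤ 1 / 2 := by
      apply div_le_div_of_nonneg_left one_pos.le two_pos
      linarith
    linarith
  have harg1 : 1 - 1 / (2 * c₂) < 1 := by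
    have : 0 < 1 / (2 * c₂) := by positivity
    linarith
  have hβ0 : 0 < β := Real.sqrt_pos.mpr harg0
  have hβ1 : β < 1 := by
    have h := Real.sqrt_lt_sqrt harg0.le harg1
    rwa [Real.sqrt_one] at h
  have hβsq : β ^ 2 = 1 - 1 / (2 * c₂) := Real.sq_sqrt harg0.le
  refine ⟨V, 1, c₂, c₂, β, one_pos, hc₂0, hc₂0, hβ0, hβ1, ?_, ?_, ?_⟩
  · intro k ξ hξ ζ hζ
    exact ⟨by simpa using hlower k ξ ζ, hupper k ξ ζ hξ hζ⟩
  · -- decrease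
    intro k ξ hξ ζ hζ
    set g : ℕ → ℝ := fun j => ‖convLyapOrb f k ξ j - convLyapOrb f k ζ j‖ ^ 2 with hg
    have hVshift : V (k + 1) (f k ξ) (f k ζ) = ∑ j ∈ Finset.range N, g (j + 1) := by
      apply Finset.sum_congr rfl
      intro j _
      rw [hg]
      rw [hshift, hshift]
    have hsum : ∑ j ∈ Finset.range N, g (j + 1) = V k ξ ζ + g N - g 0 := by
      have h1 : ∑ j ∈ Finset.range (N + 1), g j
          = (∑ j ∈ Finset.range N, g (j + 1)) + g 0 := Finset.sum_range_succ' g N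
      have h2 : ∑ j ∈ Finset.range (N + 1), g j
          = (∑ j ∈ Finset.range N, g j) + g N := Finset.sum_range_succ g N
      have h3 : V k ξ ζ = ∑ j ∈ Finset.range N, g j := rfl
      linarith
    have hg0 : g 0 = ‖ξ - ζ‖ ^ 2 := rfl
    have hgN : g N ≤ (1 / 2) * ‖ξ - ζ‖ ^ 2 := by
      have h := hcontr k N ξ ζ hξ hζ
      have h2 : g N ≤ (d * ‖ξ - ζ‖ * lam ^ N) ^ 2 :=
        pow_le_pow_left₀ (norm_nonneg _) h 2
      have h3 : (d * ‖ξ - ζ‖ * lam ^ N) ^ 2 = d ^ 2 * (lam ^ N) ^ 2 * ‖ξ - ζ‖ ^ 2 := by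
        ring
      have h4 : d ^ 2 * (lam ^ N) ^ 2 ≤ d' ^ 2 * lam ^ N := by
        have hdN : d ^ 2 ≤ d' ^ 2 := pow_le_pow_left₀ hd.le hdd' 2
        have hlN : (lam ^ N) ^ 2 ≤ lam ^ N := by
          have h5 := pow_le_one₀ hlam0.le hlam1.le (n := N)
          nlinarith [pow_nonneg hlam0.le N]
        apply mul_le_mul hdN hlN (by positivity) (by positivity)
      nlinarith [sq_nonneg ‖ξ - ζ‖, norm_nonneg (ξ - ζ)]
    have hub := hupper k ξ ζ hξ hζ
    have key : V (k + 1) (f k ξ) (f k ζ) ≤ V k ξ ζ - (1 / (2 * c₂)) * V k ξ ζ := by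
      rw [hVshift, hsum, hg0]
      have h5 : (1 / (2 * c₂)) * V k ξ ζ ≤ (1 / 2) * ‖ξ - ζ‖ ^ 2 := by
        rw [div_mul_eq_mul_div, div_le_iff₀ (by positivity)]
        calc 1 * V k ξ ζ = V k ξ ζ := by ring
          _ ≤ c₂ * ‖ξ - ζ‖ ^ 2 := hub
          _ = 1 / 2 * ‖ξ - ζ‖ ^ 2 * (2 * c₂) := by ring
      linarith
    calc V (k + 1) (f k ξ) (f k ζ) ≤ V k ξ ζ - (1 / (2 * c₂)) * V k ξ ζ := key
      _ = (1 - 1 / (2 * c₂)) * V k ξ ζ := by ring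
      _ = β ^ 2 * V k ξ ζ := by rw [hβsq]
  · -- Lipschitz property
    intro k ξ hξ ζ hζ ξ' hξ' ζ' hζ'
    set X : ℝ := ‖ξ - ξ'‖ + ‖ζ - ζ'‖ with hX
    set Y : ℝ := ‖ξ - ζ‖ + ‖ξ' - ζ'‖ with hY
    have hterm2 : ∀ j ∈ Finset.range N,
        |‖convLyapOrb f k ξ j - convLyapOrb f k ζ j‖ ^ 2
          - ‖convLyapOrb f k ξ' j - convLyapOrb f k ζ' j‖ ^ 2|
          ≤ d' ^ 2 * X * Y := by
      intro j _
      set a : EuclideanSpace ℝ (Fin n) := convLyapOrb f k ξ j - convLyapOrb f k ζ j with ha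
      set b : EuclideanSpace ℝ (Fin n) := convLyapOrb f k ξ' j - convLyapOrb f k ζ' j with hb
      have hab : a - b = (convLyapOrb f k ξ j - convLyapOrb f k ξ' j)
          - (convLyapOrb f k ζ j - convLyapOrb f k ζ' j) := by
        rw [ha, hb]; abel
      have h1 : ‖a - b‖ ≤ d' * X := by
        rw [hab]
        calc ‖(convLyapOrb f k ξ j - convLyapOrb f k ξ' j)
              - (convLyapOrb f k ζ j - convLyapOrb f k ζ' j)‖
            ≤ ‖convLyapOrb f k ξ j - convLyapOrb f k ξ' j‖
              + ‖convLyapOrb f k ζ j - convLyapOrb f k ζ' j‖ := norm_sub_le _ _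
          _ ≤ d' * ‖ξ - ξ'‖ + d' * ‖ζ - ζ'‖ :=
              add_le_add (hterm k j ξ ξ' hξ hξ') (hterm k j ζ ζ' hζ hζ')
          _ = d' * X := by rw [hX]; ring
      have h2 : ‖a‖ + ‖b‖ ≤ d' * Y := by
        calc ‖a‖ + ‖b‖ ≤ d' * ‖ξ - ζ‖ + d' * ‖ξ' - ζ'‖ :=
              add_le_add (hterm k j ξ ζ hξ hζ) (hterm k j ξ' ζ' hξ' hζ')
          _ = d' * Y := by rw [hY]; ring
      have h3 : |‖a‖ ^ 2 - ‖b‖ ^ 2| ≤ ‖a - b‖ * (‖a‖ + ‖b‖) := by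
        have he : ‖a‖ ^ 2 - ‖b‖ ^ 2 = (‖a‖ - ‖b‖) * (‖a‖ + ‖b‖) := by ring
        rw [he, abs_mul, abs_of_nonneg (by positivity : (0:ℝ) ≤ ‖a‖ + ‖b‖)]
        exact mul_le_mul_of_nonneg_right (abs_norm_sub_norm_le a b) (by positivity)
      calc |‖a‖ ^ 2 - ‖b‖ ^ 2| ≤ ‖a - b‖ * (‖a‖ + ‖b‖) := h3
        _ ≤ (d' * X) * (d' * Y) :=
            mul_le_mul h1 h2 (by positivity) (by positivity)
        _ = d' ^ 2 * X * Y := by ring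
    calc |V k ξ ζ - V k ξ' ζ'|
        = |∑ j ∈ Finset.range N,
            (‖convLyapOrb f k ξ j - convLyapOrb f k ζ j‖ ^ 2
              - ‖convLyapOrb f k ξ' j - convLyapOrb f k ζ' j‖ ^ 2)| := by
          rw [hV, Finset.sum_sub_distrib]
      _ ≤ ∑ j ∈ Finset.range N,
            |‖convLyapOrb f k ξ j - convLyapOrb f k ζ j‖ ^ 2
              - ‖convLyapOrb f k ξ' j - convLyapOrb f k ζ' j‖ ^ 2| :=
          Finset.abs_sum_le_sum_abs _ _
      _ ≤ ∑ _j ∈ Finset.range N, d' ^ 2 * X * Y := Finset.sum_le_sum hterm2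
      _ = N * (d' ^ 2 * X * Y) := by
          rw [Finset.sum_const, Finset.card_range, nsmul_eq_mul]
      _ = c₂ * X * Y := by rw [hc₂]; ring
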